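/- Suppose the growth function is f(k) = k. Then for every d ≥ 1 and μ ≥ 0, the cardinality of the nested Smolyak grid is N(d,μ) = C(d+μ, μ). -/

import Mathlib

/-- Multi-indices `i : Fin d → ℕ` with `i k ≥ 1` for all `k` and `∑ k, i k = d + μ`. -/
def smolyakIndices (d μ : ℕ) : Finset (Fin d → ℕ) :=
  (Fintype.piFinset fun _ => Finset.Icc 1 (d + μ)).filter fun i => ∑ k, i k = d + μ

/-- The Smolyak grid `Γ(d, μ)` based on the node sets `S`. -/
noncomputable def smolyakGrid (S : ℕ → Finset ℝ) (d μ : ℕ) : Finset (Fin d → ℝ) :=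
  (smolyakIndices d μ).biUnion fun i => Fintype.piFinset fun k => S (i k)

/-- `N(d, μ)`: the number of nodes in the Smolyak grid. -/
noncomputable def smolyakCard (S : ℕ → Finset ℝ) (d μ : ℕ) : ℕ :=
  (smolyakGrid S d μ).card

lemma count_sum_singleton {D : ℕ} (s : Multiset (Fin D)) :
    ∑ i, s.count i • ({i} : Multiset (Fin D)) = s := by
  calc ∑ i, s.count i • ({i} : Multiset (Fin D))
      = ∑ i ∈ s.toFinset, s.count i • ({i} : Multiset (Fin D)) := by
        refine (Finset.sum_subset (Finset.subset_univ _) ?_).symm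
        intro x _ hx
        have : s.count x = 0 := Multiset.count_eq_zero.2 fun h => hx (Multiset.mem_toFinset.2 h)
        rw [this, zero_nsmul]
    _ = s := Multiset.toFinset_sum_count_nsmul_eq s

lemma sum_count_univ {D : ℕ} (s : Multiset (Fin D)) :
    ∑ i, s.count i = Multiset.card s := by
  calc ∑ i, s.count i = ∑ i ∈ s.toFinset, s.count i := by
        refine (Finset.sum_subset (Finset.subset_univ _) ?_).symm
        intro x _ hx
        exact Multiset.count_eq_zero.2 fun h => hx (Multiset.mem_toFinset.2 h)
    _ = Multiset.card s := Multiset.toFinset_sum_count_eq s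

lemma card_finAntidiagonal' (D n : ℕ) :
    (Finset.finAntidiagonal D n).card = (D + n - 1).choose n := by
  have e : {f // f ∈ Finset.finAntidiagonal D n} ≃ Sym (Fin D) n :=
  { toFun := fun f => ⟨∑ i, f.1 i • ({i} : Multiset (Fin D)), by
      rw [Multiset.card_sum]
      simpa using (Finset.mem_finAntidiagonal).1 f.2⟩
    invFun := fun m => ⟨fun i => m.1.count i, by
      rw [Finset.mem_finAntidiagonal, sum_count_univ, m.2]⟩
    left_inv := fun f => by
      ext i
      simp [Multiset.count_sum', Multiset.count_nsmul, Multiset.count_singleton]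
    right_inv := fun m => by
      ext1
      exact count_sum_singleton m.1 }
  rw [← Fintype.card_coe, Fintype.card_congr e, Sym.card_sym_eq_choose, Fintype.card_fin]

/-- Cardinality of the "slack" index set. -/
lemma card_Jset (d μ : ℕ) (hd : 1 ≤ d) :
    (((Fintype.piFinset fun _ : Fin d => Finset.Icc 1 (d + μ)).filter
      fun j => ∑ k, j k ≤ d + μ)).card = (d + μ).choose μ := by
  classical
  have key : (((Fintype.piFinset fun _ : Fin d => Finset.Icc 1 (d + μ)).filter
      fun j => ∑ k, j k ≤ d + μ)).card = (Finset.finAntidiagonal (d + 1) μ).card := by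
    refine Finset.card_nbij'
      (fun j => Fin.snoc (fun k : Fin d => j k - 1) (d + μ - ∑ k, j k))
      (fun f => fun k : Fin d => f k.castSucc + 1) ?_ ?_ ?_ ?_
    · intro j hj
      rw [Finset.mem_coe, Finset.mem_filter, Fintype.mem_piFinset] at hj
      obtain ⟨h1, h2⟩ := hj
      have hj1 : ∀ k, 1 ≤ j k := fun k => (Finset.mem_Icc.1 (h1 k)).1
      have hd' : d ≤ ∑ k, j k := by
        calc d = ∑ _k : Fin d, 1 := by simp
          _ ≤ ∑ k, j k := Finset.sum_le_sum fun k _ => hj1 k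
      rw [Finset.mem_coe, Finset.mem_finAntidiagonal, Fin.sum_univ_castSucc]
      simp only [Fin.snoc_castSucc, Fin.snoc_last]
      have hsub : ∑ k : Fin d, (j k - 1) + d = ∑ k, j k := by
        calc ∑ k : Fin d, (j k - 1) + d = ∑ k : Fin d, ((j k - 1) + 1) := by
              rw [Finset.sum_add_distrib]; simp
          _ = ∑ k, j k := Finset.sum_congr rfl fun k _ => Nat.sub_add_cancel (hj1 k)
      omega
    · intro f hf
      rw [Finset.mem_coe, Finset.mem_finAntidiagonal] at hf
      have hle : ∑ k : Fin d, f k.castSucc ≤ μ := by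
        rw [← hf, Fin.sum_univ_castSucc]; omega
      rw [Finset.mem_coe, Finset.mem_filter, Fintype.mem_piFinset]
      constructor
      · intro k
        show f k.castSucc + 1 ∈ Finset.Icc 1 (d + μ)
        rw [Finset.mem_Icc]
        have : f k.castSucc ≤ ∑ i : Fin d, f i.castSucc :=
          Finset.single_le_sum (f := fun i : Fin d => f i.castSucc)
            (fun i _ => Nat.zero_le _) (Finset.mem_univ k)
        omega
      · calc ∑ k : Fin d, (f k.castSucc + 1) = ∑ k : Fin d, f k.castSucc + d := by
              rw [Finset.sum_add_distrib]; simp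
          _ ≤ d + μ := by omega
    · intro j hj
      rw [Finset.mem_coe, Finset.mem_filter, Fintype.mem_piFinset] at hj
      funext k
      simp only [Fin.snoc_castSucc]
      have : 1 ≤ j k := (Finset.mem_Icc.1 (hj.1 k)).1
      omega
    · intro f hf
      rw [Finset.mem_coe, Finset.mem_finAntidiagonal] at hf
      funext k
      refine Fin.lastCases ?_ ?_ k
      · simp only [Fin.snoc_last]
        have : ∑ k : Fin d, (f k.castSucc + 1) = ∑ k : Fin d, f k.castSucc + d := by
          rw [Finset.sum_add_distrib]; simp
        have h2 : ∑ k : Fin d, f k.castSucc + f (Fin.last d) = μ := by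
          rw [← Fin.sum_univ_castSucc, hf]
        omega
      · intro i
        simp
  rw [card_finAntidiagonal'] at key
  have h4 : d + 1 + μ - 1 = d + μ := by rw [Nat.add_right_comm]; exact Nat.succ_sub_one _
  rw [h4] at key
  exact key

/-- For the growth function `f(k) = k`, the nested Smolyak grid has `N(d, μ) = C(d+μ, μ)`
nodes. -/
theorem smolyakCard_of_id
    (S : ℕ → Finset ℝ) (hS_nested : ∀ k, 1 ≤ k → S k ⊆ S (k + 1))
    (hS_card : ∀ k, 1 ≤ k → (S k).card = k)
    (d μ : ℕ) (hd : 1 ≤ d) :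
    smolyakCard S d μ = (d + μ).choose μ := by
  classical
  -- monotone chain
  have hmono : ∀ a b, 1 ≤ a → a ≤ b → S a ⊆ S b := by
    intro a b ha hab
    induction b with
    | zero => omega
    | succ n ih =>
      rcases Nat.lt_or_ge a (n + 1) with h | h
      · exact (ih (by omega)).trans (hS_nested n (by omega))
      · have : a = n + 1 := by omega
        subst this; exact subset_rfl
  -- enumeration
  obtain ⟨a1, ha1⟩ : (S 1).Nonempty := Finset.card_pos.1 (by rw [hS_card 1 le_rfl]; norm_num)
  have hex : ∀ k : ℕ, ((S (k + 2)) \ S (k + 1)).Nonempty := by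
    intro k
    apply Finset.card_pos.1
    have h1 : (S (k + 1)).card < (S (k + 2)).card := by
      rw [hS_card (k + 1) (by omega), hS_card (k + 2) (by omega)]; omega
    have h2 : (S (k+2) \ S (k+1)).card + (S (k+1)).card = (S (k+2) ∪ S (k+1)).card :=
      Finset.card_sdiff_add_card _ _
    have h3 : (S (k+2)).card ≤ (S (k+2) ∪ S (k+1)).card :=
      Finset.card_le_card Finset.subset_union_left
    omega
  choose e he using hex
  set g : ℕ → ℝ := fun k => if k ≤ 1 then a1 else e (k - 2) with hgdef
  have hg1 : g 1 = a1 := by simp [hgdef]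
  have hg2 : ∀ k : ℕ, g (k + 2) = e k := by
    intro k; simp [hgdef]
  have hgmem2 : ∀ k, g (k + 2) ∈ S (k + 2) := fun k => by
    rw [hg2]; exact (Finset.mem_sdiff.1 (he k)).1
  have hgnot : ∀ k, g (k + 2) ∉ S (k + 1) := fun k => by
    rw [hg2]; exact (Finset.mem_sdiff.1 (he k)).2
  have hgmem : ∀ k, 1 ≤ k → g k ∈ S k := by
    intro k hk
    match k, hk with
    | 1, _ => rw [hg1]; exact ha1
    | (m+2), _ => exact hgmem2 m
  have hginj : ∀ a b, 1 ≤ a → 1 ≤ b → g a = g b → a = b := by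
    have key : ∀ a b, 1 ≤ a → a < b → g a ≠ g b := by
      intro a b ha hab heq
      obtain ⟨m, rfl⟩ : ∃ m, b = m + 2 := ⟨b - 2, by omega⟩
      exact hgnot m (heq ▸ hmono a (m+1) ha (by omega) (hgmem a ha))
    intro a b ha hb heq
    rcases lt_trichotomy a b with h | h | h
    · exact absurd heq (key a b ha h)
    · exact h
    · exact absurd heq.symm (key b a hb h)
  have hSg : ∀ k, 1 ≤ k → S k = (Finset.Icc 1 k).image g := by
    intro k hk
    induction k, hk using Nat.le_induction with
    | base =>
      obtain ⟨x, hx⟩ := Finset.card_eq_one.1 (hS_card 1 le_rfl)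
      have : a1 = x := by rw [hx] at ha1; exact Finset.mem_singleton.1 ha1
      rw [hx, ← this, ← hg1]
      simp
    | succ n hn ih =>
      have hicc : Finset.Icc 1 (n + 1) = insert (n + 1) (Finset.Icc 1 n) := by
        ext x
        simp only [Finset.mem_Icc, Finset.mem_insert]
        omega
      rw [hicc, Finset.image_insert, ← ih]
      have hnotmem : g (n + 1) ∉ S n := by
        obtain ⟨m, rfl⟩ : ∃ m, n = m + 1 := ⟨n - 1, by omega⟩
        exact hgnot m
      refine (Finset.eq_of_subset_of_card_le ?_ ?_).symm
      · intro x hx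
        rcases Finset.mem_insert.1 hx with h | h
        · subst h; exact hgmem (n + 1) (by omega)
        · exact hS_nested n hn h
      · rw [Finset.card_insert_of_notMem hnotmem, hS_card (n+1) (by omega), hS_card n hn]
  -- the slack index set
  set Jset := ((Fintype.piFinset fun _ : Fin d => Finset.Icc 1 (d + μ)).filter
      fun j => ∑ k, j k ≤ d + μ) with hJdef
  have hgrid : smolyakGrid S d μ = Jset.image (fun j k => g (j k)) := by
    ext x
    rw [smolyakGrid, Finset.mem_biUnion, Finset.mem_image]
    constructor
    · rintro ⟨i, hi, hx⟩
      rw [smolyakIndices, Finset.mem_filter, Fintype.mem_piFinset] at hi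
      obtain ⟨hi1, hi2⟩ := hi
      rw [Fintype.mem_piFinset] at hx
      have hik : ∀ k, 1 ≤ i k ∧ i k ≤ d + μ := fun k => Finset.mem_Icc.1 (hi1 k)
      have : ∀ k, ∃ m, (1 ≤ m ∧ m ≤ i k) ∧ g m = x k := by
        intro k
        have := hx k
        rw [hSg (i k) (hik k).1, Finset.mem_image] at this
        obtain ⟨m, hm, hgm⟩ := this
        exact ⟨m, Finset.mem_Icc.1 hm, hgm⟩
      choose j hj1 hj2 using this
      refine ⟨j, ?_, funext hj2⟩
      rw [hJdef, Finset.mem_filter, Fintype.mem_piFinset]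
      constructor
      · intro k
        rw [Finset.mem_Icc]
        exact ⟨(hj1 k).1, le_trans (hj1 k).2 (hik k).2⟩
      · calc ∑ k, j k ≤ ∑ k, i k := Finset.sum_le_sum fun k _ => (hj1 k).2
          _ = d + μ := hi2
    · rintro ⟨j, hj, rfl⟩
      rw [hJdef, Finset.mem_filter, Fintype.mem_piFinset] at hj
      obtain ⟨hj1, hj2⟩ := hj
      have hjk : ∀ k, 1 ≤ j k := fun k => (Finset.mem_Icc.1 (hj1 k)).1
      set p : Fin d := ⟨0, hd⟩
      set m := d + μ - ∑ k, j k with hm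
      refine ⟨fun k => j k + if k = p then m else 0, ?_, ?_⟩
      · rw [smolyakIndices, Finset.mem_filter, Fintype.mem_piFinset]
        have hsum : ∑ k, (j k + if k = p then m else 0) = ∑ k, j k + m := by
          rw [Finset.sum_add_distrib, Finset.sum_ite_eq' Finset.univ p fun _ => m]
          simp
        constructor
        · intro k
          rw [Finset.mem_Icc]
          have h1 : j k ≤ ∑ i, j i :=
            Finset.single_le_sum (fun i _ => Nat.zero_le _) (Finset.mem_univ k)
          have h2 : (if k = p then m else 0) ≤ m := by split <;> omega
          have h0 : 1 ≤ j k := hjk k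
          omega
        · show ∑ k, (j k + if k = p then m else 0) = d + μ
          omega
      · rw [Fintype.mem_piFinset]
        intro k
        show g (j k) ∈ S (j k + if k = p then m else 0)
        exact hmono (j k) _ (hjk k) (Nat.le_add_right _ _) (hgmem (j k) (hjk k))
  have hinj : Set.InjOn (fun (j : Fin d → ℕ) (k : Fin d) => g (j k)) (Jset : Set (Fin d → ℕ)) := by
    intro j hj j' hj' heq
    rw [hJdef, Finset.coe_filter, Set.mem_setOf_eq] at hj hj'
    rw [Fintype.mem_piFinset] at hj hj'
    funext k
    exact hginj (j k) (j' k) (Finset.mem_Icc.1 (hj.1 k)).1 (Finset.mem_Icc.1 (hj'.1 k)).1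
      (congrFun heq k)
  rw [smolyakCard, hgrid, Finset.card_image_of_injOn hinj, hJdef]
  exact card_Jset d μ hd
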